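/- Let m > 0, t_f > 0, I0 ∈ (0,1), and let x* ∈ (0, t_f) satisfy I(t_f − x*)·(m − x*) = 1. Then for every y ∈ [0, t_f] with y ≠ x*, one has 𝒟(x*, y) < 𝒟(y, y). In other words, x* satisfies the invasion condition: against any resident population strategy y ≠ x*, the strategy x* does strictly better than y does against itself, so x* can invade any other delay strategy. -/

import Mathlib

/-- Prevalence function `I(u) = I0 / (I0 + (1 - I0) exp(-u))`. -/
noncomputable def Ifun (I0 u : ℝ) : ℝ := I0 / (I0 + (1 - I0) * Real.exp (-u))

/-- Susceptibility probability `p(x, x̄)`. -/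
noncomputable def pSus (tf I0 x xb : ℝ) : ℝ :=
  ((1 - Ifun I0 (tf - max x xb)) / (1 - I0)) *
    Real.exp (-(Ifun I0 (tf - max x xb)) * max (xb - x) 0)

/-- Restricted disutility `𝒟(x, x̄) = 1 - p(x,x̄)(1 - x/m)`. -/
noncomputable def Dis (m tf I0 x xb : ℝ) : ℝ := 1 - pSus tf I0 x xb * (1 - x / m)

lemma denom_pos {I0 : ℝ} (h : I0 ∈ Set.Ioo (0:ℝ) 1) (u : ℝ) :
    0 < I0 + (1 - I0) * Real.exp (-u) := by
  have := Real.exp_pos (-u); nlinarith [h.1, h.2]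

lemma Ifun_pos {I0 : ℝ} (h : I0 ∈ Set.Ioo (0:ℝ) 1) (u : ℝ) : 0 < Ifun I0 u :=
  div_pos h.1 (denom_pos h u)

lemma Ifun_lt_one {I0 : ℝ} (h : I0 ∈ Set.Ioo (0:ℝ) 1) (u : ℝ) : Ifun I0 u < 1 := by
  rw [Ifun, div_lt_one (denom_pos h u)]
  nlinarith [Real.exp_pos (-u), h.2]

lemma Ifun_strictMono {I0 : ℝ} (h : I0 ∈ Set.Ioo (0:ℝ) 1) : StrictMono (Ifun I0) := by
  intro u v huv
  unfold Ifun
  apply div_lt_div_of_pos_left h.1 (denom_pos h v)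
  have : Real.exp (-v) < Real.exp (-u) := Real.exp_lt_exp.mpr (by linarith)
  nlinarith [h.2]

lemma Ifun_hasDerivAt {I0 : ℝ} (h : I0 ∈ Set.Ioo (0:ℝ) 1) (u : ℝ) :
    HasDerivAt (Ifun I0) (Ifun I0 u * (1 - Ifun I0 u)) u := by
  have hexp : HasDerivAt (fun u : ℝ => Real.exp (-u)) (Real.exp (-u) * (-1)) u :=
    (Real.hasDerivAt_exp (-u)).comp u (hasDerivAt_id u).neg
  have hD : HasDerivAt (fun u : ℝ => I0 + (1 - I0) * Real.exp (-u))
      ((1 - I0) * (Real.exp (-u) * (-1))) u :=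
    (hexp.const_mul (1 - I0)).const_add I0
  have hd := (hasDerivAt_const u I0).div hD (ne_of_gt (denom_pos h u))
  refine HasDerivAt.congr_deriv hd ?_
  have hne := ne_of_gt (denom_pos h u)
  rw [Ifun]
  field_simp
  ring

lemma hfun_hasDerivAt {I0 : ℝ} (h : I0 ∈ Set.Ioo (0:ℝ) 1) (c u : ℝ) :
    HasDerivAt (fun u => (1 - Ifun I0 u) * (c + u))
      ((1 - Ifun I0 u) * (1 - Ifun I0 u * (c + u))) u := by
  have h1 := ((hasDerivAt_const u (1:ℝ)).sub (Ifun_hasDerivAt h u)).mul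
    ((hasDerivAt_id u).const_add c)
  refine HasDerivAt.congr_deriv h1 ?_
  simp only [id_eq, Pi.sub_apply]
  ring

/-- An interior Nash equilibrium `x*` satisfies the invasion condition: against any
resident population strategy `y ≠ x*`, the strategy `x*` does strictly better than
`y` does against itself. -/
theorem stmt1 (m tf I0 xstar : ℝ) (hm : 0 < m) (htf : 0 < tf)
    (hI0 : I0 ∈ Set.Ioo (0:ℝ) 1) (hx : xstar ∈ Set.Ioo 0 tf)
    (heq : Ifun I0 (tf - xstar) * (m - xstar) = 1) :
    ∀ y ∈ Set.Icc (0:ℝ) tf, y ≠ xstar →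
      Dis m tf I0 xstar y < Dis m tf I0 y y := by
  obtain ⟨hx0, hxtf⟩ := hx
  have h10 : 0 < 1 - I0 := by linarith [hI0.2]
  set Ia := Ifun I0 (tf - xstar) with hIadef
  have hIapos : 0 < Ia := Ifun_pos hI0 _
  have hIalt : Ia < 1 := Ifun_lt_one hI0 _
  have hmx : 0 < m - xstar := by nlinarith
  intro y hy hne
  set Ib := Ifun I0 (tf - y) with hIbdef
  have hIbpos : 0 < Ib := Ifun_pos hI0 _
  have hIblt : Ib < 1 := Ifun_lt_one hI0 _
  rcases lt_or_gt_of_ne hne with hlt | hgt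
  · -- y < xstar : compare (1-Ia)(m-xstar) with (1-Ib)(m-y) via monotonicity
    have hanti : StrictAntiOn (fun u => (1 - Ifun I0 u) * ((m - tf) + u))
        (Set.Ici (tf - xstar)) := by
      apply strictAntiOn_of_deriv_neg (convex_Ici _)
      · exact fun u _ => (hfun_hasDerivAt hI0 (m - tf) u).continuousAt.continuousWithinAt
      · intro u hu
        rw [interior_Ici] at hu
        rw [(hfun_hasDerivAt hI0 (m - tf) u).deriv]
        have hIu : Ia < Ifun I0 u := Ifun_strictMono hI0 hu
        have hIu1 : Ifun I0 u < 1 := Ifun_lt_one hI0 u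
        have h1 : 1 < Ifun I0 u * ((m - tf) + u) := by nlinarith [Set.mem_Ioi.mp hu]
        nlinarith
    have hmem : tf - y ∈ Set.Ici (tf - xstar) := by
      simp only [Set.mem_Ici]; linarith
    have key := hanti (Set.self_mem_Ici) hmem (by linarith : tf - xstar < tf - y)
    simp only at key
    have key' : (1 - Ib) * (m - y) < (1 - Ia) * (m - xstar) := by
      have e1 : (m - tf) + (tf - y) = m - y := by ring
      have e2 : (m - tf) + (tf - xstar) = m - xstar := by ring
      rw [e1, e2] at key; exact key
    have hmaxx : max xstar y = xstar := max_eq_left hlt.le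
    have hmaxy : max y y = y := max_self y
    have hz1 : max (y - xstar) 0 = 0 := max_eq_right (by linarith)
    have hz2 : max (y - y) 0 = 0 := by simp
    simp only [Dis, pSus, hmaxx, hmaxy, hz1, hz2, mul_zero, Real.exp_zero, mul_one,
      ← hIadef, ← hIbdef]
    have hgoal : (1 - Ib) / (1 - I0) * (1 - y / m) < (1 - Ia) / (1 - I0) * (1 - xstar / m) := by
      have e3 : (1 - Ib) / (1 - I0) * (1 - y / m) = ((1 - Ib) * (m - y)) / ((1 - I0) * m) := by
        field_simp <;> ring
      have e4 : (1 - Ia) / (1 - I0) * (1 - xstar / m)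
          = ((1 - Ia) * (m - xstar)) / ((1 - I0) * m) := by
        field_simp <;> ring
      rw [e3, e4]
      exact div_lt_div_of_pos_right key' (by positivity)
    linarith
  · -- xstar < y : same prevalence Ib, use exp(-t) > 1 - t
    have hmaxx : max xstar y = y := max_eq_right hgt.le
    have hmaxy : max y y = y := max_self y
    have hz1 : max (y - xstar) 0 = y - xstar := max_eq_left (by linarith)
    have hz2 : max (y - y) 0 = 0 := by simp
    have hIblta : Ib < Ia := Ifun_strictMono hI0 (by linarith : tf - y < tf - xstar)
    set t := Ib * (y - xstar) with htdef
    have ht : 0 < t := mul_pos hIbpos (by linarith)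
    have hexp : 1 - t < Real.exp (-t) := by
      have := Real.add_one_lt_exp (by linarith : -t ≠ 0)
      linarith
    have key : m - y < Real.exp (-t) * (m - xstar) := by
      have h1 : Ib * (m - xstar) < 1 := by nlinarith
      have h2 : (1 - t) * (m - xstar) ≥ m - y := by nlinarith
      nlinarith
    simp only [Dis, pSus, hmaxx, hmaxy, hz1, hz2, mul_zero, Real.exp_zero, mul_one,
      ← hIbdef]
    have hgoal : (1 - Ib) / (1 - I0) * (1 - y / m)
        < (1 - Ib) / (1 - I0) * Real.exp (-Ib * (y - xstar)) * (1 - xstar / m) := by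
      have e0 : -Ib * (y - xstar) = -t := by rw [htdef]; ring
      rw [e0]
      have e3 : (1 - Ib) / (1 - I0) * (1 - y / m) = ((1 - Ib) * (m - y)) / ((1 - I0) * m) := by
        field_simp <;> ring
      have e4 : (1 - Ib) / (1 - I0) * Real.exp (-t) * (1 - xstar / m)
          = ((1 - Ib) * (Real.exp (-t) * (m - xstar))) / ((1 - I0) * m) := by
        field_simp <;> ring
      rw [e3, e4]
      apply div_lt_div_of_pos_right _ (by positivity)
      exact mul_lt_mul_of_pos_left key (by linarith)
    linarith
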